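/- If a connected E-GCM graph is admissible, then any connected E-GCM subgraph of it is also admissible. -/

import Mathlib

/-- An E-generalized Cartan matrix (E-GCM) on a finite index type `ι`. -/
structure EGCM (ι : Type*) [Fintype ι] where
  /-- the matrix of amplitudes -/
  M : ι → ι → ℝ
  diag : ∀ i, M i i = 2
  offDiag_nonpos : ∀ i j, i ≠ j → M i j ≤ 0
  zero_iff : ∀ i j, M i j = 0 ↔ M j i = 0
  prod_cond : ∀ i j, i ≠ j → M i j * M j i ≠ 0 →
    4 ≤ M i j * M j i ∨
      ∃ k : ℕ, 3 ≤ k ∧ M i j * M j i = 4 * Real.cos (Real.pi / k) ^ 2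

namespace EGCM

variable {ι : Type*} [Fintype ι]

/-- Adjacency in the E-GCM graph. -/
def Adj (E : EGCM ι) (i j : ι) : Prop := i ≠ j ∧ E.M i j ≠ 0

/-- The underlying simple graph of an E-GCM graph. -/
def graph (E : EGCM ι) : SimpleGraph ι where
  Adj i j := i ≠ j ∧ E.M i j ≠ 0
  symm := by
    constructor
    intro i j ⟨h1, h2⟩
    exact ⟨h1.symm, fun hz => h2 ((E.zero_iff j i).mp hz)⟩
  loopless := by constructor; intro i ⟨h, _⟩; exact h rfl

/-- The result of firing node `i` from position `lam`. -/
def fire (E : EGCM ι) (lam : ι → ℝ) (i : ι) : ι → ℝ := fun j => lam j - E.M i j * lam i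

/-- The position resulting from firing the nodes in the list `s` in order. -/
def fireList (E : EGCM ι) (lam : ι → ℝ) : List ι → (ι → ℝ)
  | [] => lam
  | i :: s => fireList E (E.fire lam i) s

/-- The firing sequence `s` is legal from position `lam`: at each step the
fired node carries a positive number. -/
def Legal (E : EGCM ι) (lam : ι → ℝ) : List ι → Prop
  | [] => True
  | i :: s => 0 < lam i ∧ Legal E (E.fire lam i) s

/-- A position with no positive entries. -/
def Terminal (lam : ι → ℝ) : Prop := ∀ i, lam i ≤ 0

/-- `s` is a (convergent) game sequence from `lam`: a legal firing sequence whose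
resulting position has no positive entries. -/
def IsGameSeq (E : EGCM ι) (lam : ι → ℝ) (s : List ι) : Prop :=
  E.Legal lam s ∧ Terminal (E.fireList lam s)

/-- The position after `k` steps of the infinite firing sequence `f`. -/
def posAt (E : EGCM ι) (lam : ι → ℝ) (f : ℕ → ι) : ℕ → (ι → ℝ)
  | 0 => lam
  | k + 1 => E.fire (posAt E lam f k) (f k)

/-- `f` is a divergent game sequence from `lam`: an infinite sequence of legal firings. -/
def DivergentSeq (E : EGCM ι) (lam : ι → ℝ) (f : ℕ → ι) : Prop :=
  ∀ k, 0 < E.posAt lam f k (f k)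

/-- A dominant position: all numbers nonnegative. -/
def Dominant (lam : ι → ℝ) : Prop := ∀ i, 0 ≤ lam i

/-- A strongly dominant position: all numbers positive. -/
def StronglyDominant (lam : ι → ℝ) : Prop := ∀ i, 0 < lam i

/-- The E-GCM graph is admissible if some nonzero dominant position has a
convergent game sequence. -/
def Admissible (E : EGCM ι) : Prop :=
  ∃ lam : ι → ℝ, Dominant lam ∧ lam ≠ 0 ∧ ∃ s : List ι, E.IsGameSeq lam s

/-- The E-GCM graph is strongly admissible if every nonzero dominant position has a
convergent game sequence. -/
def StronglyAdmissible (E : EGCM ι) : Prop :=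
  ∀ lam : ι → ℝ, Dominant lam → lam ≠ 0 → ∃ s : List ι, E.IsGameSeq lam s

/-- A position is adjacency-free if no position reachable from it by a legal firing
sequence (i.e. no intermediate position of a game sequence) has positive numbers at
two adjacent nodes. -/
def AdjacencyFree (E : EGCM ι) (lam : ι → ℝ) : Prop :=
  ∀ s : List ι, E.Legal lam s →
    ¬ ∃ i j, E.Adj i j ∧ 0 < E.fireList lam s i ∧ 0 < E.fireList lam s j

/-- A `J`-complement-dominant position: zero exactly at the nodes of `J`, positive elsewhere. -/
def JcDominant (J : Set ι) (lam : ι → ℝ) : Prop :=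
  (∀ j ∈ J, lam j = 0) ∧ ∀ i ∉ J, 0 < lam i

open Classical in
/-- The Coxeter exponent `m i j` attached to the E-GCM: `m i j = k` if
`M i j * M j i = 4 cos²(π/k)` with `k ≥ 2`, and `m i j = 0` (representing `∞`)
if `M i j * M j i ≥ 4`. -/
noncomputable def m (E : EGCM ι) (i j : ι) : ℕ :=
  if i = j then 1
  else if h : ∃ k : ℕ, 2 ≤ k ∧ E.M i j * E.M j i = 4 * Real.cos (Real.pi / k) ^ 2
    then Nat.find h else 0

theorem m_symm (E : EGCM ι) (i j : ι) : E.m i j = E.m j i := by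
  unfold m
  rcases eq_or_ne i j with rfl | hij
  · simp
  · rw [if_neg hij, if_neg (Ne.symm hij)]
    by_cases h : ∃ k : ℕ, 2 ≤ k ∧ E.M i j * E.M j i = 4 * Real.cos (Real.pi / k) ^ 2
    · have h' : ∃ k : ℕ, 2 ≤ k ∧ E.M j i * E.M i j = 4 * Real.cos (Real.pi / k) ^ 2 := by
        rw [mul_comm]; exact h
      rw [dif_pos h, dif_pos h']
      exact le_antisymm (Nat.find_mono fun n hn => by rwa [mul_comm (E.M i j)])
        (Nat.find_mono fun n hn => by rwa [mul_comm (E.M j i)])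
    · have h' : ¬ ∃ k : ℕ, 2 ≤ k ∧ E.M j i * E.M i j = 4 * Real.cos (Real.pi / k) ^ 2 := by
        rw [mul_comm]; exact h
      rw [dif_neg h, dif_neg h']

theorem m_offDiag (E : EGCM ι) (i j : ι) (h : i ≠ j) : E.m i j ≠ 1 := by
  classical
  unfold m
  rw [if_neg h]
  split
  · rename_i hex
    have := Nat.find_spec hex
    omega
  · omega

/-- The Coxeter matrix associated to the E-GCM. -/
noncomputable def cox (E : EGCM ι) : CoxeterMatrix ι where
  M := fun i j => E.m i j
  isSymm := by
    ext i j
    exact E.m_symm j i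
  diagonal := by intro i; simp [m]
  off_diagonal := fun i j h => E.m_offDiag i j h

/-- The reflection `S i` of the geometric representation:
`S i v = v − 2 B(α i, v) • α i` where `B (α i, α j) = M i j / 2`. -/
noncomputable def S [DecidableEq ι] (E : EGCM ι) (i : ι) : Module.End ℝ (ι → ℝ) :=
  LinearMap.id -
    LinearMap.smulRight
      ((∑ k, E.M i k • LinearMap.proj k : (ι → ℝ) →ₗ[ℝ] ℝ)) (Pi.single i 1)

end EGCM

section Roots

variable {ι : Type*} [Fintype ι] [DecidableEq ι]
variable {W : Type*} [Group W]

/-- `α` is a root for the geometric representation `σ`. -/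
def IsRoot (σ : W →* Module.End ℝ (ι → ℝ)) (α : ι → ℝ) : Prop :=
  ∃ (w : W) (i : ι), σ w (Pi.single i 1) = α

/-- `α` is a positive root. -/
def IsPosRoot (σ : W →* Module.End ℝ (ι → ℝ)) (α : ι → ℝ) : Prop :=
  IsRoot σ α ∧ ∀ i, 0 ≤ α i

/-- `α` is a negative root. -/
def IsNegRoot (σ : W →* Module.End ℝ (ι → ℝ)) (α : ι → ℝ) : Prop :=
  IsRoot σ α ∧ ∀ i, α i ≤ 0

/-- `N_M(w)`: the set of positive roots sent to negative roots by `w`. -/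
def NM (σ : W →* Module.End ℝ (ι → ℝ)) (w : W) : Set (ι → ℝ) :=
  {α | IsPosRoot σ α ∧ IsNegRoot σ (σ w α)}

/-- `𝔖_M(α)`: the positive roots which are real multiples of `α`. -/
def Sfrak (σ : W →* Module.End ℝ (ι → ℝ)) (α : ι → ℝ) : Set (ι → ℝ) :=
  {β | (∃ K : ℝ, β = K • α) ∧ IsPosRoot σ β}

end Roots

section Parabolic

variable {ι : Type*} {W : Type*} [Group W]

/-- The standard parabolic subgroup `W_J`. -/
def parabolic {M : CoxeterMatrix ι} (cs : CoxeterSystem M W) (J : Set ι) : Subgroup W :=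
  Subgroup.closure (cs.simple '' J)

/-- The set `W^J` of minimal coset representatives. -/
def minReps {M : CoxeterMatrix ι} (cs : CoxeterSystem M W) (J : Set ι) : Set W :=
  {w | ∀ j ∈ J, cs.length w < cs.length (w * cs.simple j)}

end Parabolic

namespace EGCM

variable {ι : Type*} [Fintype ι]

/-- The E-GCM subgraph induced on a subset `I` of the nodes. -/
def restrict (E : EGCM ι) (I : Finset ι) : EGCM {x // x ∈ I} where
  M i j := E.M i j
  diag i := E.diag i
  offDiag_nonpos i j h := E.offDiag_nonpos i j (fun hc => h (Subtype.ext hc))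
  zero_iff i j := E.zero_iff i j
  prod_cond i j h := E.prod_cond i j (fun hc => h (Subtype.ext hc))

/-- Adjacent nodes `i`, `j` are odd-neighborly if `m i j` is odd. -/
def OddNeighborly (E : EGCM ι) (i j : ι) : Prop := E.Adj i j ∧ Odd (E.m i j)

/-- The factor `K_{j i} = −(M j i) / (2 cos (π / m i j))` attached to an
odd-neighborly pair `(i, j)`. -/
noncomputable def Kfac (E : EGCM ι) (i j : ι) : ℝ :=
  -E.M j i / (2 * Real.cos (Real.pi / (E.m i j : ℝ)))

/-- `Π_P` for the ON-path `P` given by a list of nodes: the product of the factors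
`K` along consecutive pairs. -/
noncomputable def piON (E : EGCM ι) : List ι → ℝ
  | [] => 1
  | [_] => 1
  | a :: b :: t => piON E (b :: t) * E.Kfac a b

/-- `y` can be reached from `x` by a path of odd neighbors. -/
def ONReach (E : EGCM ι) (x y : ι) : Prop :=
  ∃ l : List ι, l.Chain' E.OddNeighborly ∧ l.head? = some x ∧ l.getLast? = some y

/-- The ON-connected component containing `x` is unital ON-cyclic: every ON-cycle
whose nodes lie in this component has `Π = 1`. -/
def UnitalONCyclicAt (E : EGCM ι) (x : ι) : Prop :=
  ∀ l : List ι, l ≠ [] → l.Chain' E.OddNeighborly → (∀ y ∈ l, E.ONReach x y) →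
    l.head? = l.getLast? → E.piON l = 1

/-- The E-GCM graph has an odd asymmetry: an odd-neighborly pair `i`, `j` with
`M i j ≠ M j i`. -/
def HasOddAsymmetry (E : EGCM ι) : Prop :=
  ∃ i j, E.OddNeighborly i j ∧ E.M i j ≠ E.M j i

end EGCM

section FullComm

variable {ι : Type*} [Fintype ι] {W : Type*} [Group W]

/-- An elementary simplification of commuting type: interchange adjacent letters
`x`, `y` with `m x y = 2`. -/
def CommMove (E : EGCM ι) (l l' : List ι) : Prop :=
  ∃ (u v : List ι) (x y : ι), E.m x y = 2 ∧ l = u ++ x :: y :: v ∧ l' = u ++ y :: x :: v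

/-- `w` is fully commutative: any reduced word for `w` can be obtained from any other
by a sequence of elementary simplifications of commuting type. -/
def FullyCommutative (E : EGCM ι) {W : Type*} [Group W] (cs : CoxeterSystem E.cox W)
    (w : W) : Prop :=
  ∀ l l' : List ι,
    cs.IsReduced l.reverse → cs.wordProd l.reverse = w →
    cs.IsReduced l'.reverse → cs.wordProd l'.reverse = w →
    Relation.ReflTransGen (CommMove E) l l'

end FullComm

/-- The Coxeter graph of a Coxeter matrix: an edge between `i ≠ j` iff `m i j ≠ 2`. -/
def coxGraph {ι : Type*} (cm : CoxeterMatrix ι) : SimpleGraph ι where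
  Adj i j := i ≠ j ∧ cm i j ≠ 2
  symm := by
    constructor
    intro i j ⟨h1, h2⟩
    exact ⟨h1.symm, by rwa [cm.symmetric j i]⟩
  loopless := by constructor; intro i ⟨h, _⟩; exact h rfl

/-- The E-GCM `E` has associated exponents given by the Coxeter matrix `cm`:
`M i j * M j i = 4 cos² (π / cm i j)` when `cm i j ≠ 0` and `M i j * M j i ≥ 4`
when `cm i j = 0` (representing `∞`), with `M i j = 0` iff `cm i j = 2`. -/
def Compat {ι : Type*} [Fintype ι] (E : EGCM ι) (cm : CoxeterMatrix ι) : Prop :=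
  ∀ i j : ι, i ≠ j →
    (E.M i j = 0 ↔ cm i j = 2) ∧
    ((cm i j = 0 ∧ 4 ≤ E.M i j * E.M j i) ∨
      (cm i j ≠ 0 ∧ E.M i j * E.M j i = 4 * Real.cos (Real.pi / (cm i j : ℝ)) ^ 2))

section AuxNG

set_option linter.unusedSectionVars false

open Finset

namespace EGCM

variable {ι : Type*} [Fintype ι]

theorem fireList_append' (E : EGCM ι) (s t : List ι) : ∀ p : ι → ℝ,
    E.fireList p (s ++ t) = E.fireList (E.fireList p s) t := by
  induction s with
  | nil => intro p; rfl
  | cons x s ih => intro p; simpa [fireList] using ih (E.fire p x)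

theorem legal_append' (E : EGCM ι) (s t : List ι) : ∀ p : ι → ℝ,
    E.Legal p (s ++ t) ↔ E.Legal p s ∧ E.Legal (E.fireList p s) t := by
  induction s with
  | nil => intro p; simp [Legal, fireList]
  | cons x s ih =>
      intro p
      show (0 < p x ∧ E.Legal (E.fire p x) (s ++ t)) ↔
        (0 < p x ∧ E.Legal (E.fire p x) s) ∧ E.Legal (E.fireList (E.fire p x) s) t
      rw [ih (E.fire p x), and_assoc]

/-- the alternating word `[i, j, i, j, ...]` of length `n`. -/
def alt : ℕ → ι → ι → List ι
  | 0, _, _ => []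
  | n+1, i, j => i :: alt n j i

theorem alt_length : ∀ (n : ℕ) (i j : ι), (alt n i j).length = n := by
  intro n
  induction n with
  | zero => intro i j; rfl
  | succ n ih => intro i j; simp [alt, ih]

theorem alt_succ : ∀ (n : ℕ) (i j : ι),
    alt (n+1) i j = alt n i j ++ [if Even n then i else j] := by
  intro n
  induction n with
  | zero => intro i j; simp [alt]
  | succ n ih =>
      intro i j
      show i :: alt (n+1) j i = (i :: alt n j i) ++ _
      rw [ih j i]
      rcases Nat.even_or_odd n with h | h
      · simp [h, Nat.even_add_one, List.cons_append]
      · simp [Nat.not_even_iff_odd.mpr h, h, Nat.even_add_one, List.cons_append]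

/-- If two adjacent nodes with amplitude product `≥ 4` both carry positive numbers,
no legal play can ever terminate. -/
theorem no_terminal_of_heavy (E : EGCM ι) {i j : ι} (hij : i ≠ j)
    (hu : E.M i j < 0) (h4 : 4 ≤ E.M i j * E.M j i) {p : ι → ℝ}
    (hpi : 0 < p i) (hpj : 0 < p j) :
    ∀ s, E.Legal p s → ¬ Terminal (E.fireList p s) := by
  set u : ℝ := -E.M i j with hudef
  have hu0 : 0 < u := by simp [hudef]; linarith
  -- monotone quantity
  have mono : ∀ (s : List ι) (q : ι → ℝ), E.Legal q s →
      u * q i + 2 * q j ≤ u * (E.fireList q s) i + 2 * (E.fireList q s) j := by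
    intro s
    induction s with
    | nil => intro q _; exact le_refl _
    | cons x s ih =>
        intro q hq
        obtain ⟨hx, hq'⟩ := hq
        refine le_trans ?_ (ih (E.fire q x) hq')
        have hfi : E.fire q x i = q i - E.M x i * q x := rfl
        have hfj : E.fire q x j = q j - E.M x j * q x := rfl
        rw [hfi, hfj]
        rcases eq_or_ne x i with rfl | hxi
        · rw [E.diag]
          have hxj : E.M x j = -u := by rw [hudef, neg_neg]
          rw [hxj]; nlinarith
        · rcases eq_or_ne x j with rfl | hxj
          · rw [E.diag]
            have key : 4 ≤ u * (-E.M x i) := by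
              have : u * (-E.M x i) = E.M i x * E.M x i := by rw [hudef]; ring
              rw [this]; exact h4
            nlinarith [mul_nonneg (sub_nonneg.mpr key) hx.le]
          · have h1 : E.M x i ≤ 0 := E.offDiag_nonpos x i hxi
            have h2 : E.M x j ≤ 0 := E.offDiag_nonpos x j hxj
            nlinarith [mul_nonneg (mul_nonneg hu0.le (neg_nonneg.mpr h1)) hx.le,
              mul_nonneg (neg_nonneg.mpr h2) hx.le]
  intro s hs hterm
  have h1 := mono s p hs
  have h2 := hterm i
  have h3 := hterm j
  nlinarith

end EGCM

end AuxNG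
section AuxTrig

open Finset

/-- the scaled fired values of the alternating rank-2 play -/
noncomputable def NGFf (θ X Y : ℝ) (t : ℕ) : ℝ :=
  Real.sin (t * θ) / Real.sin θ * X + Real.sin (((t : ℝ) - 1) * θ) / Real.sin θ * Y

/-- sum of the scaled fired values at even steps -/
noncomputable def NGSEv (θ X Y : ℝ) (m : ℕ) : ℝ :=
  ∑ s ∈ Finset.range m, if Even s then NGFf θ X Y (s+1) else 0

/-- sum of the scaled fired values at odd steps -/
noncomputable def NGSOd (θ X Y : ℝ) (m : ℕ) : ℝ :=
  ∑ s ∈ Finset.range m, if Even s then 0 else NGFf θ X Y (s+1)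

theorem NG_sin_step (x θ : ℝ) :
    Real.sin ((x+2)*θ) = 2*Real.cos θ * Real.sin ((x+1)*θ) - Real.sin (x*θ) := by
  have h1 : (x+2)*θ = (x+1)*θ + θ := by ring
  have h2 : x*θ = (x+1)*θ - θ := by ring
  rw [h1, h2, Real.sin_add, Real.sin_sub]; ring

theorem NGFf_rec (θ X Y : ℝ) (t : ℕ) :
    NGFf θ X Y (t+2) = 2*Real.cos θ * NGFf θ X Y (t+1) - NGFf θ X Y t := by
  have h1 : Real.sin (((t:ℝ)+2)*θ)
      = 2*Real.cos θ * Real.sin (((t:ℝ)+1)*θ) - Real.sin ((t:ℝ)*θ) := NG_sin_step _ _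
  have h2 : Real.sin (((t:ℝ)+1)*θ)
      = 2*Real.cos θ * Real.sin ((t:ℝ)*θ) - Real.sin (((t:ℝ)-1)*θ) := by
    have := NG_sin_step ((t:ℝ)-1) θ
    rw [show (t:ℝ)-1+2 = (t:ℝ)+1 by ring, show (t:ℝ)-1+1 = (t:ℝ) by ring] at this
    exact this
  unfold NGFf
  push_cast
  rw [show ((t:ℝ)+2-1) = (t:ℝ)+1 by ring, show ((t:ℝ)+1-1) = (t:ℝ) by ring, h1, h2]
  ring

theorem NG_parity_sum₁ (g : ℕ → ℝ) (m : ℕ) :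
    (∑ s ∈ Finset.range m, if Even s then g (s+1) else 0)
      = (∑ s ∈ Finset.range m, if Even s then 0 else g s)
        + (if Even m then 0 else g m) := by
  induction m with
  | zero => simp
  | succ m ih =>
      rw [Finset.sum_range_succ, Finset.sum_range_succ, ih]
      rcases Nat.even_or_odd m with h | h
      · simp [h, Nat.even_add_one]
      · simp [Nat.not_even_iff_odd.mpr h, Nat.even_add_one]

theorem NG_parity_sum₂ (g : ℕ → ℝ) (m : ℕ) :
    (∑ s ∈ Finset.range m, if Even s then 0 else g (s+1)) + g 0
      = (∑ s ∈ Finset.range m, if Even s then g s else 0)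
        + (if Even m then g m else 0) := by
  induction m with
  | zero => simp
  | succ m ih =>
      rw [Finset.sum_range_succ, Finset.sum_range_succ]
      by_cases h : Even m
      · have hm1 : ¬ Even (m+1) := by simp [Nat.even_add_one, h]
        simp only [if_pos h, if_neg hm1] at ih ⊢
        linarith
      · have hm1 : Even (m+1) := by simpa [Nat.even_add_one] using h
        simp only [if_neg h, if_pos hm1] at ih ⊢
        linarith

theorem NG_sum_swap (θ X Y : ℝ) (m : ℕ) (h0 : Real.sin ((m:ℝ)*θ) = 0) :
    NGSEv θ X Y m = NGSOd θ Y X m := by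
  set g : ℕ → ℝ := fun t => Real.sin ((t:ℝ)*θ)/Real.sin θ with hg
  have hFf : ∀ (A B : ℝ) (s : ℕ), NGFf θ A B (s+1) = g (s+1) * A + g s * B := by
    intro A B s
    unfold NGFf
    rw [hg]
    push_cast
    rw [show ((s:ℝ)+1-1) = (s:ℝ) by ring]
  have e1 : ∀ s:ℕ, (if Even s then NGFf θ X Y (s+1) else 0)
      = (if Even s then g (s+1) else 0) * X + (if Even s then g s else 0) * Y := by
    intro s; by_cases h : Even s <;> simp [h, hFf]
  have e2 : ∀ s:ℕ, (if Even s then (0:ℝ) else NGFf θ Y X (s+1))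
      = (if Even s then 0 else g (s+1)) * Y + (if Even s then 0 else g s) * X := by
    intro s; by_cases h : Even s <;> simp [h, hFf]
  unfold NGSEv NGSOd
  rw [Finset.sum_congr rfl (fun s _ => e1 s), Finset.sum_congr rfl (fun s _ => e2 s),
    Finset.sum_add_distrib, Finset.sum_add_distrib, ← Finset.sum_mul, ← Finset.sum_mul,
    ← Finset.sum_mul, ← Finset.sum_mul]
  have hgm : g m = 0 := by rw [hg]; simp [h0]
  have hg0 : g 0 = 0 := by rw [hg]; simp
  have p1 := NG_parity_sum₁ g m
  have p2 := NG_parity_sum₂ g m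
  rw [hgm] at p1 p2
  rw [hg0] at p2
  have q1 : (∑ s ∈ Finset.range m, if Even s then g (s+1) else 0)
      = ∑ s ∈ Finset.range m, if Even s then 0 else g s := by
    rw [p1]; split <;> ring
  have q2 : (∑ s ∈ Finset.range m, if Even s then 0 else g (s+1))
      = ∑ s ∈ Finset.range m, if Even s then g s else 0 := by
    have := p2; split at this <;> linarith
  rw [q1, q2]; ring

end AuxTrig
section AuxCore

set_option linter.unusedSectionVars false
set_option maxHeartbeats 1000000

open Finset

namespace EGCM

variable {ι : Type*} [Fintype ι]

theorem legal_singleton (E : EGCM ι) (q : ι → ℝ) (x : ι) : E.Legal q [x] ↔ 0 < q x := by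
  constructor
  · rintro ⟨h, -⟩; exact h
  · intro h; exact ⟨h, trivial⟩

theorem rank2_core (E : EGCM ι) {i j : ι} (hij : i ≠ j) {m : ℕ} (hm : 3 ≤ m)
    (hu : E.M i j < 0) (hv : E.M j i < 0)
    (huv : E.M i j * E.M j i = 4 * Real.cos (Real.pi / m) ^ 2)
    {p : ι → ℝ} (ha : 0 < p i) (hb : 0 < p j) :
    E.Legal p (alt m i j) ∧
    E.fireList p (alt m i j) = fun k => p k
      - (NGSEv (Real.pi/m) (Real.sqrt (-E.M i j) * p i) (Real.sqrt (-E.M j i) * p j) m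
          / Real.sqrt (-E.M i j)) * E.M i k
      - (NGSOd (Real.pi/m) (Real.sqrt (-E.M i j) * p i) (Real.sqrt (-E.M j i) * p j) m
          / Real.sqrt (-E.M j i)) * E.M j k := by
  have hm0 : (0:ℝ) < m := by
    have : (3:ℝ) ≤ m := by exact_mod_cast hm
    linarith
  set θ : ℝ := Real.pi / m with hθdef
  set ru : ℝ := Real.sqrt (-E.M i j) with hrudef
  set rv : ℝ := Real.sqrt (-E.M j i) with hrvdef
  set X : ℝ := ru * p i with hXdef
  set Y : ℝ := rv * p j with hYdef
  have hθpos : 0 < θ := by rw [hθdef]; positivity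
  have hθle : θ ≤ Real.pi / 3 := by
    rw [hθdef, div_le_div_iff₀ hm0 (by norm_num)]
    have : (3:ℝ) ≤ m := by exact_mod_cast hm
    nlinarith [Real.pi_pos]
  have hθlt : θ < Real.pi / 2 := by nlinarith [Real.pi_pos]
  have hθltpi : θ < Real.pi := by nlinarith [Real.pi_pos]
  have hsin : 0 < Real.sin θ := Real.sin_pos_of_pos_of_lt_pi hθpos hθltpi
  have hcos : 0 < Real.cos θ := Real.cos_pos_of_mem_Ioo ⟨by nlinarith [Real.pi_pos], hθlt⟩
  have hu0 : (0:ℝ) < -E.M i j := by linarith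
  have hv0 : (0:ℝ) < -E.M j i := by linarith
  have hru : 0 < ru := Real.sqrt_pos.mpr hu0
  have hrv : 0 < rv := Real.sqrt_pos.mpr hv0
  have hru2 : ru * ru = -E.M i j := Real.mul_self_sqrt hu0.le
  have hrv2 : rv * rv = -E.M j i := Real.mul_self_sqrt hv0.le
  have hrc : ru * rv = 2 * Real.cos θ := by
    rw [hrudef, hrvdef, ← Real.sqrt_mul hu0.le]
    have h1 : -E.M i j * -E.M j i = (2*Real.cos θ)^2 := by
      have : (2*Real.cos θ)^2 = 4 * Real.cos θ ^ 2 := by ring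
      rw [this, ← huv]; ring
    rw [h1, Real.sqrt_sq (by linarith)]
  have hmθ : (m:ℝ) * θ = Real.pi := by
    rw [hθdef]; field_simp
  have hXpos : 0 < X := mul_pos hru ha
  have hYpos : 0 < Y := mul_pos hrv hb
  have hsin_nonneg : ∀ t : ℕ, t ≤ m → 0 ≤ Real.sin (t * θ) := by
    intro t ht
    apply Real.sin_nonneg_of_nonneg_of_le_pi
    · positivity
    · rw [← hmθ]
      have : (t:ℝ) ≤ m := by exact_mod_cast ht
      nlinarith
  have hsin_pos : ∀ t : ℕ, 1 ≤ t → t < m → 0 < Real.sin (t * θ) := by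
    intro t h1 h2
    apply Real.sin_pos_of_pos_of_lt_pi
    · have : (1:ℝ) ≤ (t:ℝ) := by exact_mod_cast h1
      nlinarith
    · rw [← hmθ]
      have : (t:ℝ) < m := by exact_mod_cast h2
      nlinarith
  have hF0 : NGFf θ X Y 0 = -Y := by
    unfold NGFf
    push_cast
    rw [show ((0:ℝ)-1)*θ = -θ by ring, Real.sin_neg, zero_mul, Real.sin_zero]
    field_simp
    ring
  have hF1 : NGFf θ X Y 1 = X := by
    unfold NGFf
    push_cast
    rw [show ((1:ℝ)-1)*θ = 0 by ring, Real.sin_zero, one_mul, div_self hsin.ne']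
    ring
  have hFpos : ∀ t : ℕ, 1 ≤ t → t ≤ m → 0 < NGFf θ X Y t := by
    intro t h1 h2
    unfold NGFf
    have hc1 : ((t:ℝ) - 1) = ((t-1 : ℕ) : ℝ) := by
      have : (1:ℕ) ≤ t := h1
      push_cast [this]
      ring
    rw [hc1]
    rcases lt_or_eq_of_le h2 with hlt | heq
    · have A := hsin_pos t h1 hlt
      have B := hsin_nonneg (t-1) (by omega)
      have C : 0 < Real.sin (t*θ)/Real.sin θ * X := by positivity
      have D : 0 ≤ Real.sin (((t-1:ℕ):ℝ)*θ)/Real.sin θ * Y := by positivity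
      linarith
    · have A : Real.sin ((t:ℝ)*θ) = 0 := by
        rw [heq, hmθ]; exact Real.sin_pi
      have B : 0 < Real.sin (((t-1:ℕ):ℝ)*θ) := hsin_pos (t-1) (by omega) (by omega)
      rw [A]
      have : 0 < Real.sin (((t-1:ℕ):ℝ)*θ)/Real.sin θ * Y := by positivity
      simp only [zero_div, zero_mul, zero_add]
      exact this
  have hSEstep : ∀ t, NGSEv θ X Y (t+1)
      = NGSEv θ X Y t + if Even t then NGFf θ X Y (t+1) else 0 := by
    intro t; unfold NGSEv; rw [Finset.sum_range_succ]
  have hSOstep : ∀ t, NGSOd θ X Y (t+1)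
      = NGSOd θ X Y t + if Even t then 0 else NGFf θ X Y (t+1) := by
    intro t; unfold NGSOd; rw [Finset.sum_range_succ]
  have hFrec : ∀ t, NGFf θ X Y (t+2) = (ru*rv) * NGFf θ X Y (t+1) - NGFf θ X Y t := by
    intro t; rw [hrc]; exact NGFf_rec θ X Y t
  -- the invariant for the two played nodes
  have key : ∀ t : ℕ,
      (X - 2 * NGSEv θ X Y t + (ru*rv) * NGSOd θ X Y t
        = if Even t then NGFf θ X Y (t+1) else - NGFf θ X Y t) ∧
      (Y + (ru*rv) * NGSEv θ X Y t - 2 * NGSOd θ X Y t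
        = if Even t then - NGFf θ X Y t else NGFf θ X Y (t+1)) := by
    intro t
    induction t with
    | zero =>
        constructor
        · simp only [if_pos (Even.zero : Even (0:ℕ))]
          have h1 : NGSEv θ X Y 0 = 0 := by simp [NGSEv]
          have h2 : NGSOd θ X Y 0 = 0 := by simp [NGSOd]
          rw [h1, h2, hF1]; ring
        · simp only [if_pos (Even.zero : Even (0:ℕ))]
          have h1 : NGSEv θ X Y 0 = 0 := by simp [NGSEv]
          have h2 : NGSOd θ X Y 0 = 0 := by simp [NGSOd]
          rw [h1, h2, hF0]; ring
    | succ t ih =>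
        obtain ⟨ih1, ih2⟩ := ih
        rcases Nat.even_or_odd t with hev | hod
        · have hodd1 : ¬ Even (t+1) := by simp [Nat.even_add_one, hev]
          rw [if_pos hev] at ih1 ih2
          constructor
          · rw [if_neg hodd1, hSEstep, hSOstep, if_pos hev, if_pos hev]
            linarith
          · rw [if_neg hodd1, hSEstep, hSOstep, if_pos hev, if_pos hev, hFrec t]
            linarith
        · have hnev : ¬ Even t := Nat.not_even_iff_odd.mpr hod
          have hev1 : Even (t+1) := by simpa [Nat.even_add_one] using hnev
          rw [if_neg hnev] at ih1 ih2
          constructor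
          · rw [if_pos hev1, hSEstep, hSOstep, if_neg hnev, if_neg hnev, hFrec t]
            linarith
          · rw [if_pos hev1, hSEstep, hSOstep, if_neg hnev, if_neg hnev]
            linarith
  -- the main induction along the alternating word
  have main : ∀ t : ℕ, t ≤ m → E.Legal p (alt t i j) ∧
      E.fireList p (alt t i j) = fun k => p k - (NGSEv θ X Y t / ru) * E.M i k
        - (NGSOd θ X Y t / rv) * E.M j k := by
    intro t
    induction t with
    | zero =>
        intro _
        refine ⟨trivial, ?_⟩
        funext k
        have h1 : NGSEv θ X Y 0 = 0 := by simp [NGSEv]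
        have h2 : NGSOd θ X Y 0 = 0 := by simp [NGSOd]
        rw [h1, h2]
        show p k = _
        ring
    | succ t ih =>
        intro ht
        obtain ⟨hL, hP⟩ := ih (by omega)
        have hstep : E.fireList p (alt (t+1) i j)
            = E.fire (E.fireList p (alt t i j)) (if Even t then i else j) := by
          rw [alt_succ, fireList_append']
          rfl
        rcases Nat.even_or_odd t with hev | hod
        · -- step t+1 fires node i
          have hkey : X - 2 * NGSEv θ X Y t + (ru*rv) * NGSOd θ X Y t
              = NGFf θ X Y (t+1) := by rw [(key t).1, if_pos hev]
          have hvali : E.fireList p (alt t i j) i = NGFf θ X Y (t+1) / ru := by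
            rw [hP]
            show p i - (NGSEv θ X Y t / ru) * E.M i i - (NGSOd θ X Y t / rv) * E.M j i
              = NGFf θ X Y (t+1) / ru
            rw [E.diag i, ← hkey, show E.M j i = -(rv*rv) by rw [hrv2, neg_neg], hXdef]
            field_simp
            ring
          have hpos : 0 < NGFf θ X Y (t+1) / ru :=
            div_pos (hFpos (t+1) (by omega) ht) hru
          constructor
          · rw [alt_succ, if_pos hev, legal_append']
            exact ⟨hL, (E.legal_singleton _ _).mpr (by rw [hvali]; exact hpos)⟩
          · rw [hstep, if_pos hev]
            funext k
            show E.fireList p (alt t i j) k - E.M i k * E.fireList p (alt t i j) i = _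
            rw [hvali, hP]
            show p k - (NGSEv θ X Y t / ru) * E.M i k - (NGSOd θ X Y t / rv) * E.M j k
                - E.M i k * (NGFf θ X Y (t+1)/ru)
              = p k - (NGSEv θ X Y (t+1) / ru) * E.M i k
                - (NGSOd θ X Y (t+1) / rv) * E.M j k
            rw [hSEstep t, hSOstep t, if_pos hev, if_pos hev]
            field_simp
            ring
        · -- step t+1 fires node j
          have hnev : ¬ Even t := Nat.not_even_iff_odd.mpr hod
          have hkey : Y + (ru*rv) * NGSEv θ X Y t - 2 * NGSOd θ X Y t
              = NGFf θ X Y (t+1) := by rw [(key t).2, if_neg hnev]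
          have hvalj : E.fireList p (alt t i j) j = NGFf θ X Y (t+1) / rv := by
            rw [hP]
            show p j - (NGSEv θ X Y t / ru) * E.M i j - (NGSOd θ X Y t / rv) * E.M j j
              = NGFf θ X Y (t+1) / rv
            rw [E.diag j, ← hkey, show E.M i j = -(ru*ru) by rw [hru2, neg_neg], hYdef]
            field_simp
            ring
          have hpos : 0 < NGFf θ X Y (t+1) / rv :=
            div_pos (hFpos (t+1) (by omega) ht) hrv
          constructor
          · rw [alt_succ, if_neg hnev, legal_append']
            exact ⟨hL, (E.legal_singleton _ _).mpr (by rw [hvalj]; exact hpos)⟩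
          · rw [hstep, if_neg hnev]
            funext k
            show E.fireList p (alt t i j) k - E.M j k * E.fireList p (alt t i j) j = _
            rw [hvalj, hP]
            show p k - (NGSEv θ X Y t / ru) * E.M i k - (NGSOd θ X Y t / rv) * E.M j k
                - E.M j k * (NGFf θ X Y (t+1)/rv)
              = p k - (NGSEv θ X Y (t+1) / ru) * E.M i k
                - (NGSOd θ X Y (t+1) / rv) * E.M j k
            rw [hSEstep t, hSOstep t, if_neg hnev, if_neg hnev]
            field_simp
            ring
  exact main m le_rfl

end EGCM

end AuxCore
section AuxPoly

set_option linter.unusedSectionVars false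
set_option maxHeartbeats 1000000

namespace EGCM

variable {ι : Type*} [Fintype ι]

/-- The polygon property of the numbers game at a position admitting
a convergent play. -/
theorem polygon (E : EGCM ι) {i j : ι} (hij : i ≠ j) {p : ι → ℝ}
    (hpi : 0 < p i) (hpj : 0 < p j)
    (hterm : ∃ s, E.Legal p s ∧ Terminal (E.fireList p s)) :
    ∃ m, 2 ≤ m ∧ E.Legal p (alt m i j) ∧ E.Legal p (alt m j i) ∧
      E.fireList p (alt m i j) = E.fireList p (alt m j i) := by
  by_cases hz : E.M i j = 0
  · have hz' : E.M j i = 0 := (E.zero_iff i j).mp hz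
    refine ⟨2, le_rfl, ?_, ?_, ?_⟩
    · exact ⟨hpi, by show 0 < p j - E.M i j * p i; rw [hz]; simpa, trivial⟩
    · exact ⟨hpj, by show 0 < p i - E.M j i * p j; rw [hz']; simpa, trivial⟩
    · funext k
      show p k - E.M i k * p i - E.M j k * (p j - E.M i j * p i)
        = p k - E.M j k * p j - E.M i k * (p i - E.M j i * p j)
      rw [hz, hz']
      ring
  · have hz' : E.M j i ≠ 0 := fun h => hz ((E.zero_iff j i).mp h)
    have hu : E.M i j < 0 := lt_of_le_of_ne (E.offDiag_nonpos i j hij) hz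
    have hv : E.M j i < 0 := lt_of_le_of_ne (E.offDiag_nonpos j i hij.symm) hz'
    rcases E.prod_cond i j hij (mul_ne_zero hz hz') with h4 | ⟨m, hm3, hmeq⟩
    · exfalso
      obtain ⟨s, hs, hterm⟩ := hterm
      exact E.no_terminal_of_heavy hij hu h4 hpi hpj s hs hterm
    · have c1 := E.rank2_core hij hm3 hu hv hmeq hpi hpj
      have c2 := E.rank2_core hij.symm hm3 hv hu (by rw [mul_comm]; exact hmeq) hpj hpi
      refine ⟨m, by omega, c1.1, c2.1, ?_⟩
      rw [c1.2, c2.2]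
      have hmθ : Real.sin ((m:ℝ) * (Real.pi/m)) = 0 := by
        have hm0 : (m:ℝ) ≠ 0 := by
          have : (3:ℝ) ≤ m := by exact_mod_cast hm3
          linarith
        rw [mul_div_cancel₀ _ hm0]
        exact Real.sin_pi
      have e1 : NGSEv (Real.pi/m) (Real.sqrt (-E.M i j) * p i) (Real.sqrt (-E.M j i) * p j) m
          = NGSOd (Real.pi/m) (Real.sqrt (-E.M j i) * p j) (Real.sqrt (-E.M i j) * p i) m :=
        NG_sum_swap _ _ _ m hmθ
      have e2 : NGSEv (Real.pi/m) (Real.sqrt (-E.M j i) * p j) (Real.sqrt (-E.M i j) * p i) m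
          = NGSOd (Real.pi/m) (Real.sqrt (-E.M i j) * p i) (Real.sqrt (-E.M j i) * p j) m :=
        NG_sum_swap _ _ _ m hmθ
      funext k
      rw [e1, ← e2]
      ring

/-- Strong convergence: every legal play extends to a terminating play of
the same length as any given terminating play. -/
theorem extend_play (E : EGCM ι) : ∀ (n : ℕ) (p : ι → ℝ) (s : List ι),
    E.Legal p s → Terminal (E.fireList p s) → s.length = n →
    ∀ t, E.Legal p t → ∃ e, E.Legal p (t ++ e) ∧ Terminal (E.fireList p (t ++ e)) ∧
      (t ++ e).length = n := by
  intro n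
  induction n with
  | zero =>
      intro p s hsL hsT hslen t htL
      have hs0 : s = [] := List.length_eq_zero_iff.mp hslen
      rw [hs0] at hsT
      cases t with
      | nil => exact ⟨[], trivial, hsT, rfl⟩
      | cons x t' =>
          exfalso
          obtain ⟨hx, -⟩ := htL
          exact absurd hx (not_lt.mpr (hsT x))
  | succ n IH =>
      intro p s hsL hsT hslen t htL
      cases s with
      | nil => simp at hslen
      | cons i s' =>
          obtain ⟨hpi, hs'L⟩ := hsL
          have hs'len : s'.length = n := by simpa using hslen
          have hs'T : Terminal (E.fireList (E.fire p i) s') := hsT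
          cases t with
          | nil => exact ⟨i :: s', ⟨hpi, hs'L⟩, hsT, by simpa using hslen⟩
          | cons j t' =>
              obtain ⟨hpj, ht'L⟩ := htL
              rcases eq_or_ne j i with rfl | hji
              · obtain ⟨e, heL, heT, helen⟩ := IH (E.fire p j) s' hs'L hs'T hs'len t' ht'L
                exact ⟨e, ⟨hpj, heL⟩, heT, by simpa using helen⟩
              · -- use the polygon property
                obtain ⟨m, hm2, hL1, hL2, heq⟩ := E.polygon hji hpj hpi
                  ⟨i :: s', ⟨hpi, hs'L⟩, hsT⟩
                -- note: polygon applied with (j, i)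
                obtain ⟨m', rfl⟩ : ∃ m', m = m' + 1 := ⟨m - 1, by omega⟩
                -- alt (m'+1) j i = j :: alt m' i j , alt (m'+1) i j = i :: alt m' j i
                have hL2' : E.Legal (E.fire p i) (alt m' j i) := hL2.2
                obtain ⟨e₂, he₂L, he₂T, he₂len⟩ :=
                  IH (E.fire p i) s' hs'L hs'T hs'len (alt m' j i) hL2'
                rw [legal_append'] at he₂L
                rw [fireList_append'] at he₂T
                -- r is the common end position of the two polygon plays
                have hr : E.fireList (E.fire p j) (alt m' i j)
                    = E.fireList (E.fire p i) (alt m' j i) := by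
                  have a1 : E.fireList p (alt (m'+1) j i)
                      = E.fireList (E.fire p j) (alt m' i j) := rfl
                  have a2 : E.fireList p (alt (m'+1) i j)
                      = E.fireList (E.fire p i) (alt m' j i) := rfl
                  rw [← a1, ← a2, heq]
                have ht₂L : E.Legal (E.fire p j) (alt m' i j ++ e₂) := by
                  rw [legal_append']
                  exact ⟨hL1.2, by rw [hr]; exact he₂L.2⟩
                have ht₂T : Terminal (E.fireList (E.fire p j) (alt m' i j ++ e₂)) := by
                  rw [fireList_append', hr]
                  exact he₂T
                have ht₂len : (alt m' i j ++ e₂).length = n := by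
                  have l1 : (alt m' j i ++ e₂).length = n := he₂len
                  simp only [List.length_append, alt_length] at l1 ⊢
                  exact l1
                obtain ⟨e, heL, heT, helen⟩ :=
                  IH (E.fire p j) (alt m' i j ++ e₂) ht₂L ht₂T ht₂len t' ht'L
                exact ⟨e, ⟨hpj, heL⟩, heT, by simpa using helen⟩

/-- Any legal play from a convergent position is no longer than the convergent play. -/
theorem length_le_of_legal (E : EGCM ι) {p : ι → ℝ} {s : List ι}
    (hsL : E.Legal p s) (hsT : Terminal (E.fireList p s)) {t : List ι}
    (htL : E.Legal p t) : t.length ≤ s.length := by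
  obtain ⟨e, -, -, hlen⟩ := E.extend_play s.length p s hsL hsT rfl t htL
  calc t.length ≤ t.length + e.length := Nat.le_add_right _ _
  _ = s.length := by simpa using hlen

end EGCM

end AuxPoly
section AuxFinal

set_option linter.unusedSectionVars false
set_option maxHeartbeats 1000000

namespace EGCM

variable {ι : Type*} [Fintype ι]

/-- From a position with uniformly bounded play lengths, greedily firing inside `I`
reaches a position nonpositive on `I`, using only nodes of `I`. -/
theorem greedy (E : EGCM ι) (I : Finset ι) : ∀ (N : ℕ) (p : ι → ℝ),
    (∀ t, E.Legal p t → t.length ≤ N) →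
    ∃ w, (∀ x ∈ w, x ∈ I) ∧ E.Legal p w ∧ ∀ k ∈ I, E.fireList p w k ≤ 0 := by
  intro N
  induction N with
  | zero =>
      intro p hbd
      refine ⟨[], by simp, trivial, ?_⟩
      intro k _
      by_contra h
      push_neg at h
      have := hbd [k] ⟨h, trivial⟩
      simp at this
  | succ N IH =>
      intro p hbd
      by_cases hex : ∃ k ∈ I, 0 < p k
      · obtain ⟨k, hkI, hk⟩ := hex
        have hbd' : ∀ t, E.Legal (E.fire p k) t → t.length ≤ N := by
          intro t ht
          have := hbd (k :: t) ⟨hk, ht⟩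
          simpa using this
        obtain ⟨w, hwI, hwL, hwT⟩ := IH (E.fire p k) hbd'
        refine ⟨k :: w, ?_, ⟨hk, hwL⟩, hwT⟩
        intro z hz
        rcases List.mem_cons.mp hz with rfl | hz
        · exact hkI
        · exact hwI z hz
      · push_neg at hex
        exact ⟨[], by simp, trivial, hex⟩

/-- Connectivity propagation: a legal play avoiding the interior issues that makes
some node of `I` positive while keeping `I` nonnegative. -/
theorem reach (E : EGCM ι) (I : Finset ι) : ∀ {x y : ι} (pth : E.graph.Walk x y),
    pth.IsPath → y ∈ I → ∀ q : ι → ℝ, 0 < q x → (∀ k ∈ I, 0 ≤ q k) →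
    (∀ k ∈ pth.support, k ≠ x → 0 ≤ q k) →
    ∃ w, E.Legal q w ∧ (∀ k ∈ I, 0 ≤ E.fireList q w k) ∧
      ∃ k ∈ I, 0 < E.fireList q w k := by
  intro x y pth
  induction pth with
  | nil =>
      rename_i u
      intro _ hyI q hx hI _
      exact ⟨[], trivial, hI, ⟨u, hyI, hx⟩⟩
  | cons h pth ih =>
      rename_i u v z
      intro hpath hyI q hqu hI hsup
      by_cases huI : u ∈ I
      · exact ⟨[], trivial, hI, ⟨u, huI, hqu⟩⟩
      · have hstep : ∀ k, k ≠ u → q k ≤ E.fire q u k := by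
          intro k hk
          show q k ≤ q k - E.M u k * q u
          have hM : E.M u k ≤ 0 := E.offDiag_nonpos u k (Ne.symm hk)
          nlinarith
        have huv : u ≠ v := h.1
        have hv0 : 0 ≤ q v := by
          apply hsup v _ huv.symm
          rw [SimpleGraph.Walk.support_cons]
          exact List.mem_cons_of_mem _ pth.start_mem_support
        have hqv' : 0 < E.fire q u v := by
          show 0 < q v - E.M u v * q u
          have hM : E.M u v < 0 := lt_of_le_of_ne (E.offDiag_nonpos u v h.1) h.2
          nlinarith
        have hpath' : pth.IsPath := ((SimpleGraph.Walk.cons_isPath_iff h pth).mp hpath).1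
        have hunot : u ∉ pth.support := ((SimpleGraph.Walk.cons_isPath_iff h pth).mp hpath).2
        have hI' : ∀ k ∈ I, 0 ≤ E.fire q u k := by
          intro k hk
          exact le_trans (hI k hk) (hstep k (fun he => huI (he ▸ hk)))
        have hsup' : ∀ k ∈ pth.support, k ≠ v → 0 ≤ E.fire q u k := by
          intro k hk _
          have hku : k ≠ u := fun he => hunot (he ▸ hk)
          refine le_trans (hsup k ?_ hku) (hstep k hku)
          rw [SimpleGraph.Walk.support_cons]
          exact List.mem_cons_of_mem _ hk
        obtain ⟨w, hwL, hwI, hwit⟩ := ih hpath' hyI (E.fire q u) hqv' hI' hsup'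
        exact ⟨u :: w, ⟨hqu, hwL⟩, hwI, hwit⟩

/-- Transfer of the game to the induced subgraph, for plays staying inside `I`. -/
theorem restrict_transfer (E : EGCM ι) (I : Finset ι) :
    ∀ (w : List ι) (hw : ∀ x ∈ w, x ∈ I) (q : ι → ℝ),
      ((E.restrict I).fireList (fun k => q k.1)
          (w.pmap (fun x h => (⟨x, h⟩ : {z // z ∈ I})) hw) = fun k => E.fireList q w k.1)
      ∧ ((E.restrict I).Legal (fun k => q k.1)
          (w.pmap (fun x h => (⟨x, h⟩ : {z // z ∈ I})) hw) ↔ E.Legal q w) := by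
  intro w
  induction w with
  | nil => intro hw q; exact ⟨rfl, Iff.rfl⟩
  | cons x w ih =>
      intro hw q
      have hxI : x ∈ I := hw x (by simp)
      have hw' : ∀ z ∈ w, z ∈ I := fun z hz => hw z (by simp [hz])
      have hfire : ((E.restrict I).fire (fun k => q k.1) ⟨x, hxI⟩)
          = (fun (k : {z // z ∈ I}) => E.fire q x k.1) := rfl
      constructor
      · show (E.restrict I).fireList
            ((E.restrict I).fire (fun k => q k.1) ⟨x, hxI⟩)
            (w.pmap (fun z h => (⟨z, h⟩ : {z // z ∈ I})) hw') = _
        rw [hfire]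
        exact (ih hw' (E.fire q x)).1
      · show (0 < q x ∧ (E.restrict I).Legal
            ((E.restrict I).fire (fun k => q k.1) ⟨x, hxI⟩)
            (w.pmap (fun z h => (⟨z, h⟩ : {z // z ∈ I})) hw')) ↔ (0 < q x ∧ _)
        rw [hfire]
        exact and_congr Iff.rfl (ih hw' (E.fire q x)).2

end EGCM

end AuxFinal

/-- **Lemma 2.7.** If a connected E-GCM graph is admissible, then any connected E-GCM
subgraph is also admissible. -/
theorem egcm_subgraph_admissible {ι : Type*} [Fintype ι] (E : EGCM ι)
    (hconn : E.graph.Connected) (hadm : E.Admissible)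
    (I : Finset ι) (hconn' : (E.restrict I).graph.Connected) :
    (E.restrict I).Admissible := by
  classical
  obtain ⟨lam, hdom, hne, s, hsL, hsT⟩ := hadm
  -- a node with a positive value
  have hx : ∃ x, 0 < lam x := by
    by_contra h
    push_neg at h
    exact hne (funext fun k => le_antisymm (h k) (hdom k))
  obtain ⟨x, hx⟩ := hx
  -- I is nonempty
  obtain ⟨⟨i0, hi0⟩⟩ := hconn'.nonempty
  -- a path from x into I, used to make some node of I positive
  obtain ⟨wk⟩ := hconn.preconnected x i0
  obtain ⟨w₁, hw₁L, hw₁I, k₀, hk₀I, hk₀pos⟩ :=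
    E.reach I wk.toPath.1 wk.toPath.2 hi0 lam hx (fun k _ => hdom k) (fun k _ _ => hdom k)
  set q' : ι → ℝ := E.fireList lam w₁ with hq'def
  -- all legal plays from q' are bounded in length
  have hbd : ∀ t, E.Legal q' t → t.length ≤ s.length := by
    intro t ht
    have hWt : E.Legal lam (w₁ ++ t) := (E.legal_append' _ _ _).mpr ⟨hw₁L, ht⟩
    have := E.length_le_of_legal hsL hsT hWt
    simp only [List.length_append] at this
    omega
  -- greedily play inside I until I is exhausted
  obtain ⟨w₂, hw₂I, hw₂L, hw₂T⟩ := E.greedy I s.length q' hbd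
  -- transfer to the subgraph
  obtain ⟨hfl, hlg⟩ := E.restrict_transfer I w₂ hw₂I q'
  refine ⟨fun k => q' k.1, fun k => hw₁I k.1 k.2, ?_, ?_⟩
  · -- the position is nonzero
    intro h0
    have h1 : q' k₀ = 0 := by
      have := congrFun h0 ⟨k₀, hk₀I⟩
      simpa using this
    rw [h1] at hk₀pos
    exact lt_irrefl 0 hk₀pos
  · refine ⟨w₂.pmap (fun z h => (⟨z, h⟩ : {z // z ∈ I})) hw₂I, hlg.mpr hw₂L, ?_⟩
    intro k
    rw [hfl]
    exact hw₂T k.1 k.2
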